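/- Suppose f(t) = Φ(b−t) − Φ(a−t) with a < b, where Φ is the standard normal CDF. Then f is log-concave on ℝ. -/
import Mathlib

open Real MeasureTheory intervalIntegral Set

/-- Standard normal density. -/
noncomputable def normalPDF (t : ℝ) : ℝ := (Real.sqrt (2 * Real.pi))⁻¹ * Real.exp (-t ^ 2 / 2)

/-- Standard normal CDF `Φ`. -/
noncomputable def normalCDF (t : ℝ) : ℝ := ∫ s in Set.Iic t, normalPDF s

lemma normalPDF_pos (x : ℝ) : 0 < normalPDF x := by
  have h : 0 < Real.sqrt (2 * Real.pi) := Real.sqrt_pos.2 (by positivity)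
  unfold normalPDF
  positivity

lemma continuous_normalPDF : Continuous normalPDF := by
  unfold normalPDF; fun_prop

lemma integrable_normalPDF : Integrable normalPDF := by
  have h : Integrable fun x : ℝ => Real.exp (-(1/2) * x ^ 2) :=
    integrable_exp_neg_mul_sq (by norm_num)
  have := h.const_mul (Real.sqrt (2 * Real.pi))⁻¹
  refine this.congr ?_
  filter_upwards with x
  unfold normalPDF
  ring_nf

lemma hasDerivAt_normalPDF (x : ℝ) : HasDerivAt normalPDF (-x * normalPDF x) x := by
  have h1 : HasDerivAt (fun t : ℝ => -t ^ 2 / 2) (-x) x := by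
    have := ((hasDerivAt_pow 2 x).neg).div_const 2
    simpa using this.congr_deriv (by ring)
  have h2 := (h1.exp).const_mul (Real.sqrt (2 * Real.pi))⁻¹
  refine HasDerivAt.congr_deriv (by exact h2) ?_
  unfold normalPDF; ring

lemma hasDerivAt_normalCDF (x : ℝ) : HasDerivAt normalCDF (normalPDF x) x := by
  have key : ∀ t : ℝ, (∫ s in Set.Iic (0:ℝ), normalPDF s) + (∫ s in (0:ℝ)..t, normalPDF s)
      = normalCDF t := by
    intro t
    rw [← integral_Iic_sub_Iic integrable_normalPDF.integrableOn
      integrable_normalPDF.integrableOn]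
    unfold normalCDF; ring
  have h0 : HasDerivAt (fun u : ℝ => ∫ s in (0:ℝ)..u, normalPDF s) (normalPDF x) x :=
    intervalIntegral.integral_hasDerivAt_right
      (integrable_normalPDF.intervalIntegrable)
      (continuous_normalPDF.stronglyMeasurable.stronglyMeasurableAtFilter)
      continuous_normalPDF.continuousAt
  have h := h0.const_add (∫ s in Set.Iic (0:ℝ), normalPDF s)
  exact h.congr_of_eventuallyEq (Filter.Eventually.of_forall fun t => (key t).symm)

lemma normalCDF_sub (α β : ℝ) :
    normalCDF β - normalCDF α = ∫ s in α..β, normalPDF s :=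
  integral_Iic_sub_Iic integrable_normalPDF.integrableOn integrable_normalPDF.integrableOn

/-- Key inequality: `(α φ(α) − β φ(β)) Z ≤ (φ(α) − φ(β))²`. -/
lemma key_ineq {α β : ℝ} (h : α < β) :
    (α * normalPDF α - β * normalPDF β) * (∫ s in α..β, normalPDF s)
      ≤ (normalPDF α - normalPDF β) ^ 2 := by
  set Z := ∫ s in α..β, normalPDF s with hZ
  have hZpos : 0 < Z :=
    intervalIntegral_pos_of_pos integrable_normalPDF.intervalIntegrable normalPDF_pos h
  have hint : IntervalIntegrable (fun s => s * normalPDF s) volume α β :=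
    (continuous_id.mul continuous_normalPDF).intervalIntegrable α β
  have hM : (∫ s in α..β, s * normalPDF s) = normalPDF α - normalPDF β := by
    have hd : ∀ s ∈ uIcc α β, HasDerivAt (fun u => -normalPDF u) (s * normalPDF s) s := by
      intro s _
      have := (hasDerivAt_normalPDF s).neg
      exact this.congr_deriv (by ring)
    rw [integral_eq_sub_of_hasDerivAt hd hint]; ring
  have h1 : α * Z ≤ ∫ s in α..β, s * normalPDF s := by
    rw [hZ, ← intervalIntegral.integral_const_mul]
    refine integral_mono_on h.le ((continuous_const.mul continuous_normalPDF).intervalIntegrable α β) hint ?_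
    intro x hx
    exact mul_le_mul_of_nonneg_right hx.1 (normalPDF_pos x).le
  have h2 : (∫ s in α..β, s * normalPDF s) ≤ β * Z := by
    rw [hZ, ← intervalIntegral.integral_const_mul]
    refine integral_mono_on h.le hint ((continuous_const.mul continuous_normalPDF).intervalIntegrable α β) ?_
    intro x hx
    exact mul_le_mul_of_nonneg_right hx.2 (normalPDF_pos x).le
  rw [hM] at h1 h2
  nlinarith [mul_le_mul_of_nonneg_right h1 (normalPDF_pos α).le,
    mul_le_mul_of_nonneg_right h2 (normalPDF_pos β).le]

/-- For `a < b`, the function `f(t) = Φ(b−t) − Φ(a−t)` is log-concave on `ℝ`: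
it is positive and `log ∘ f` is concave. -/
theorem gaussian_smoothed_indicator_log_concave (a b : ℝ) (hab : a < b) :
    (∀ t : ℝ, 0 < normalCDF (b - t) - normalCDF (a - t)) ∧
      ConcaveOn ℝ Set.univ
        (fun t : ℝ => Real.log (normalCDF (b - t) - normalCDF (a - t))) := by
  set f : ℝ → ℝ := fun t => normalCDF (b - t) - normalCDF (a - t) with hf
  have hpos : ∀ t, 0 < f t := by
    intro t
    rw [hf]
    dsimp only
    rw [normalCDF_sub]
    exact intervalIntegral_pos_of_pos integrable_normalPDF.intervalIntegrable normalPDF_pos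
      (by linarith)
  refine ⟨hpos, ?_⟩
  set f₁ : ℝ → ℝ := fun t => normalPDF (a - t) - normalPDF (b - t) with hf₁
  have hderiv : ∀ t, HasDerivAt f (f₁ t) t := by
    intro t
    have hb' : HasDerivAt (fun t : ℝ => normalCDF (b - t)) (normalPDF (b - t) * (-1)) t :=
      (hasDerivAt_normalCDF (b - t)).comp t ((hasDerivAt_id t).const_sub b)
    have ha' : HasDerivAt (fun t : ℝ => normalCDF (a - t)) (normalPDF (a - t) * (-1)) t :=
      (hasDerivAt_normalCDF (a - t)).comp t ((hasDerivAt_id t).const_sub a)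
    exact (hb'.sub ha').congr_deriv (by ring)
  have hderiv₁ : ∀ t, HasDerivAt f₁
      ((a - t) * normalPDF (a - t) - (b - t) * normalPDF (b - t)) t := by
    intro t
    have hb' : HasDerivAt (fun t : ℝ => normalPDF (b - t)) (-(b - t) * normalPDF (b - t) * (-1)) t :=
      (hasDerivAt_normalPDF (b - t)).comp t ((hasDerivAt_id t).const_sub b)
    have ha' : HasDerivAt (fun t : ℝ => normalPDF (a - t)) (-(a - t) * normalPDF (a - t) * (-1)) t :=
      (hasDerivAt_normalPDF (a - t)).comp t ((hasDerivAt_id t).const_sub a)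
    exact (ha'.sub hb').congr_deriv (by ring)
  set g : ℝ → ℝ := fun t => Real.log (f t) with hg
  have hgd : ∀ t, HasDerivAt g (f₁ t / f t) t := fun t => (hderiv t).log (hpos t).ne'
  have hgderiv : deriv g = fun t => f₁ t / f t := funext fun t => (hgd t).deriv
  have hg2 : ∀ t, HasDerivAt (fun t => f₁ t / f t)
      ((((a - t) * normalPDF (a - t) - (b - t) * normalPDF (b - t)) * f t - f₁ t * f₁ t)
        / f t ^ 2) t :=
    fun t => (hderiv₁ t).div (hderiv t) (hpos t).ne'
  refine concaveOn_of_deriv2_nonpos convex_univ ?_ ?_ ?_ ?_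
  · exact fun t _ => ((hgd t).continuousAt).continuousWithinAt
  · intro t _
    exact ((hgd t).differentiableAt).differentiableWithinAt
  · intro t _
    rw [hgderiv]
    exact ((hg2 t).differentiableAt).differentiableWithinAt
  · intro t _
    have : deriv^[2] g t = deriv (deriv g) t := by
      simp [Function.iterate_succ, Function.iterate_one]
    rw [this, hgderiv, (hg2 t).deriv]
    apply div_nonpos_of_nonpos_of_nonneg _ (by positivity)
    have hkey := key_ineq (show a - t < b - t by linarith)
    have hfeq : f t = ∫ s in (a - t)..(b - t), normalPDF s := by
      rw [hf]; dsimp only; rw [normalCDF_sub]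
    rw [hf₁]
    dsimp only
    rw [hfeq]
    nlinarith [hkey]
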